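/- Let u ∈ ℂ with |u| = 1, let τ = −1 + i√2, τ′ = −u·conj(τ), and let R₁ = [[u², τ, τ′], [0, conj(u), 0], [0, 0, conj(u)]] and J = [[0,0,1],[1,0,0],[0,1,0]]. Then the characteristic polynomial of R₁J equals X³ − τX² + conj(τ)X − 1, its roots are ζ₈ = e^{iπ/4}, ζ₈³ and −1, and consequently (R₁J)⁸ = I while (R₁J)ᵏ ≠ I for every integer 1 ≤ k ≤ 7; that is, R₁J has order exactly 8 in GL(3,ℂ), independently of u. -/

import Mathlib

open Matrix Polynomial

noncomputable section

/-- The matrix R₁ for τ = −1 + i√2 and τ′ = −u·conj(τ). -/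
def R₁ (u : ℂ) : Matrix (Fin 3) (Fin 3) ℂ :=
  let τ : ℂ := -1 + Complex.I * Real.sqrt 2
  !![u ^ 2, τ, -u * starRingEnd ℂ τ; 0, starRingEnd ℂ u, 0; 0, 0, starRingEnd ℂ u]

/-- The matrix J = [[0,0,1],[1,0,0],[0,1,0]]. -/
def Jmat : Matrix (Fin 3) (Fin 3) ℂ := !![0, 0, 1; 1, 0, 0; 0, 1, 0]

/-- ζ₈ = e^{iπ/4}. -/
def ζ₈ : ℂ := Complex.exp (Real.pi * Complex.I / 4)

lemma zeta_explicit : ζ₈ = (Real.sqrt 2 : ℂ)/2 + (Real.sqrt 2 : ℂ)/2 * Complex.I := by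
  rw [ζ₈, show (Real.pi : ℂ) * Complex.I / 4 = (↑(Real.pi/4) : ℂ) * Complex.I by push_cast; ring,
    Complex.exp_mul_I, ← Complex.ofReal_cos, ← Complex.ofReal_sin,
    Real.cos_pi_div_four, Real.sin_pi_div_four]
  push_cast; ring

lemma zeta_sq : ζ₈ ^ 2 = Complex.I := by
  rw [ζ₈, ← Complex.exp_nat_mul]
  rw [show (2:ℕ) * ((Real.pi:ℂ) * Complex.I / 4) = ↑(Real.pi/2) * Complex.I by push_cast; ring]
  rw [Complex.exp_mul_I, ← Complex.ofReal_cos, ← Complex.ofReal_sin, Real.cos_pi_div_two,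
    Real.sin_pi_div_two]
  simp

lemma zeta_pow4 : ζ₈ ^ 4 = -1 := by
  rw [ζ₈, ← Complex.exp_nat_mul]
  rw [show (4:ℕ) * ((Real.pi:ℂ) * Complex.I / 4) = ↑Real.pi * Complex.I by push_cast; ring]
  exact Complex.exp_pi_mul_I

lemma zeta_pow8 : ζ₈ ^ 8 = 1 := by
  rw [show (8:ℕ) = 4*2 from rfl, pow_mul, zeta_pow4]; norm_num

lemma zeta_sum : ζ₈ + ζ₈ ^ 3 = Complex.I * Real.sqrt 2 := by
  linear_combination ζ₈ * zeta_sq + (1 + Complex.I) * zeta_explicit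
    + ((Real.sqrt 2 : ℂ)/2) * Complex.I_sq

lemma zeta_ne_zero : ζ₈ ≠ 0 := Complex.exp_ne_zero _

lemma I_ne_one : Complex.I ≠ 1 := by
  intro h; have := congrArg Complex.im h; simp at this

lemma zeta_pow_ne_one : ∀ k : ℕ, 1 ≤ k → k ≤ 7 → ζ₈ ^ k ≠ 1 := by
  intro k hk1 hk7 h
  interval_cases k
  · exact I_ne_one (by linear_combination (ζ₈ + 1) * h - zeta_sq)
  · exact I_ne_one (by linear_combination h - zeta_sq)
  · have hm : ζ₈ = -1 := by linear_combination zeta_pow4 - ζ₈ * h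
    exact I_ne_one (by linear_combination (ζ₈ - 1) * hm - zeta_sq)
  · have : (-1:ℂ) = 1 := by rw [← zeta_pow4, h]
    norm_num at this
  · have hm : ζ₈ = -1 := by linear_combination ζ₈ * zeta_pow4 - h
    exact I_ne_one (by linear_combination (ζ₈ - 1) * hm - zeta_sq)
  · have hm : Complex.I = -1 := by linear_combination ζ₈^2 * zeta_pow4 - h - zeta_sq
    have h2 : Complex.I ^ 2 = 1 := by rw [hm]; norm_num
    rw [Complex.I_sq] at h2; norm_num at h2
  · have hm : ζ₈ = 1 := by linear_combination zeta_pow8 - ζ₈ * h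
    exact I_ne_one (by linear_combination (ζ₈ + 1) * hm - zeta_sq)

/-- the characteristic polynomial of R₁J is X³ − τX² + conj(τ)X − 1,
its roots are ζ₈, ζ₈³, −1, and R₁J has order exactly 8, independently of u. -/
theorem stmt_7 (u : ℂ) (hu : ‖u‖ = 1) :
    (R₁ u * Jmat).charpoly =
      X ^ 3 - C (-1 + Complex.I * Real.sqrt 2) * X ^ 2
        + C (starRingEnd ℂ (-1 + Complex.I * Real.sqrt 2)) * X - 1 ∧
    (R₁ u * Jmat).charpoly = (X - C ζ₈) * (X - C (ζ₈ ^ 3)) * (X - C (-1)) ∧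
    (R₁ u * Jmat) ^ 8 = 1 ∧
    ∀ k : ℕ, 1 ≤ k → k ≤ 7 → (R₁ u * Jmat) ^ k ≠ 1 := by
  have huu : u * starRingEnd ℂ u = 1 := by
    rw [Complex.mul_conj]; norm_cast; simp [Complex.normSq_eq_norm_sq, hu]
  have hct : starRingEnd ℂ (-1 + Complex.I * Real.sqrt 2) = -1 - Complex.I * Real.sqrt 2 := by
    simp [Complex.ext_iff]
  have hM : R₁ u * Jmat =
      !![(-1 + Complex.I * Real.sqrt 2 : ℂ), -u * (-1 - Complex.I * Real.sqrt 2), u^2;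
         starRingEnd ℂ u, 0, 0; 0, starRingEnd ℂ u, 0] := by
    simp [R₁, Jmat, hct]
  -- Part 1
  have part1 : (R₁ u * Jmat).charpoly =
      X ^ 3 - C (-1 + Complex.I * Real.sqrt 2) * X ^ 2
        + C (starRingEnd ℂ (-1 + Complex.I * Real.sqrt 2)) * X - 1 := by
    rw [hct, Matrix.charpoly, Matrix.det_fin_three, hM]
    simp [charmatrix_apply_eq, charmatrix_apply_ne, Matrix.vecHead, Matrix.vecTail]
    have hC : (C u) * C (starRingEnd ℂ u) = 1 := by rw [← C_mul, huu, C_1]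
    linear_combination (-(C Complex.I * C (Real.sqrt 2 : ℂ) * X) - X
      - C u * C ((starRingEnd ℂ) u) - 1) * hC
  -- Part 2
  have hCsum : C ζ₈ + C (ζ₈ ^ 3) = C Complex.I * C (Real.sqrt 2 : ℂ) := by
    rw [← C_mul, ← C_add, zeta_sum]
  have hCab : C ζ₈ * C (ζ₈ ^ 3) = (-1 : ℂ[X]) := by
    rw [← C_mul, show ζ₈ * ζ₈ ^ 3 = ζ₈ ^ 4 by ring, zeta_pow4, map_neg, C_1]
  have part2 : (R₁ u * Jmat).charpoly = (X - C ζ₈) * (X - C (ζ₈ ^ 3)) * (X - C (-1)) := by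
    rw [part1, hct]
    rw [show C (-1 + Complex.I * (Real.sqrt 2 : ℂ)) = -1 + C Complex.I * C (Real.sqrt 2:ℂ) by
      simp, show C (-1 - Complex.I * (Real.sqrt 2 : ℂ)) = -1 - C Complex.I * C (Real.sqrt 2:ℂ) by
      simp, show C (-1 : ℂ) = -1 by simp]
    linear_combination ((X:ℂ[X])^2 + X) * hCsum - ((X:ℂ[X]) + 1) * hCab
  refine ⟨part1, part2, ?_, ?_⟩
  -- Part 3 : M ^ 8 = 1
  · have d1 : ((X:ℂ[X]) - C ζ₈) ∣ X ^ 8 - 1 := by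
      rw [dvd_iff_isRoot]; simp [IsRoot, zeta_pow8]
    have d2 : ((X:ℂ[X]) - C (ζ₈ ^ 3)) ∣ X ^ 8 - 1 := by
      rw [dvd_iff_isRoot]
      simp only [IsRoot, eval_sub, eval_pow, eval_X, eval_one]
      linear_combination ((ζ₈^8)^2 + ζ₈^8 + 1) * zeta_pow8
    have d3 : ((X:ℂ[X]) - C (-1 : ℂ)) ∣ X ^ 8 - 1 := by
      rw [dvd_iff_isRoot]
      simp only [IsRoot, eval_sub, eval_pow, eval_X, eval_one]
      norm_num
    have hne12 : ζ₈ ≠ ζ₈ ^ 3 := by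
      intro h
      have h2 : (1 - Complex.I) * ζ₈ = 0 := by linear_combination h + ζ₈ * zeta_sq
      rcases mul_eq_zero.1 h2 with h3 | h3
      · exact I_ne_one (by linear_combination -h3)
      · exact zeta_ne_zero h3
    have hne13 : ζ₈ ≠ -1 := by
      intro h
      have : Complex.I = 1 := by rw [← zeta_sq, h]; norm_num
      exact I_ne_one this
    have hne23 : ζ₈ ^ 3 ≠ -1 := by
      intro h
      have hz1 : ζ₈ = 1 := by linear_combination ζ₈ * h - zeta_pow4
      exact I_ne_one (by rw [← zeta_sq, hz1]; norm_num)
    have hc12 : IsCoprime ((X:ℂ[X]) - C ζ₈) (X - C (ζ₈ ^ 3)) :=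
      isCoprime_X_sub_C_of_isUnit_sub (sub_ne_zero_of_ne hne12).isUnit
    have hc13 : IsCoprime ((X:ℂ[X]) - C ζ₈) (X - C (-1 : ℂ)) :=
      isCoprime_X_sub_C_of_isUnit_sub (sub_ne_zero_of_ne hne13).isUnit
    have hc23 : IsCoprime ((X:ℂ[X]) - C (ζ₈ ^ 3)) (X - C (-1 : ℂ)) :=
      isCoprime_X_sub_C_of_isUnit_sub (sub_ne_zero_of_ne hne23).isUnit
    have hAB : ((X:ℂ[X]) - C ζ₈) * (X - C (ζ₈ ^ 3)) ∣ X ^ 8 - 1 := hc12.mul_dvd d1 d2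
    have hdvd : ((X:ℂ[X]) - C ζ₈) * (X - C (ζ₈ ^ 3)) * (X - C (-1 : ℂ)) ∣ X ^ 8 - 1 :=
      (hc13.mul_left hc23).mul_dvd hAB d3
    obtain ⟨q, hq⟩ := hdvd
    have h0 := Matrix.aeval_self_charpoly (R₁ u * Jmat)
    have ha : aeval (R₁ u * Jmat) ((X:ℂ[X]) ^ 8 - 1) = 0 := by
      rw [hq, ← part2, _root_.map_mul, h0, zero_mul]
    simpa [sub_eq_zero] using ha
  -- Part 4
  · have hchar : ζ₈^3 - (-1 + Complex.I * Real.sqrt 2)*ζ₈^2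
        + (-1 - Complex.I * Real.sqrt 2)*ζ₈ - 1 = 0 := by
      have h := congrArg (eval ζ₈) (part1.symm.trans part2)
      rw [hct] at h
      simpa using h
    set v : Fin 3 → ℂ := ![ζ₈^2 * u, ζ₈, starRingEnd ℂ u] with hvdef
    have hv : (R₁ u * Jmat).mulVec v = ζ₈ • v := by
      rw [hM]
      funext i
      fin_cases i <;>
        simp [hvdef, Matrix.mulVec, dotProduct, Fin.sum_univ_three, Pi.smul_apply,
          smul_eq_mul]
      · linear_combination (-u) * hchar + u * huu
      · linear_combination ζ₈^2 * huu
      · ring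
    have hvk : ∀ n : ℕ, ((R₁ u * Jmat)^n).mulVec v = ζ₈^n • v := by
      intro n
      induction n with
      | zero => simp [Matrix.one_mulVec]
      | succ n ih =>
        rw [pow_succ, ← Matrix.mulVec_mulVec, hv, Matrix.mulVec_smul, ih, smul_smul, pow_succ]
        ring_nf
    intro k hk1 hk7 hk
    have h1 := hvk k
    rw [hk, Matrix.one_mulVec] at h1
    have h2 : starRingEnd ℂ u = ζ₈^k * starRingEnd ℂ u := by
      have := congrFun h1 2
      simpa [hvdef, Pi.smul_apply, smul_eq_mul] using this
    have hu0 : u ≠ 0 := by intro h; rw [h] at hu; simp at hu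
    have hcu0 : starRingEnd ℂ u ≠ 0 := by
      intro h
      exact hu0 (by simpa using congrArg (starRingEnd ℂ) h)
    have hζk : ζ₈ ^ k = 1 := by
      have := mul_right_cancel₀ hcu0 (h2.symm.trans (one_mul _).symm)
      exact this
    exact zeta_pow_ne_one k hk1 hk7 hζk

end
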